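/- Let D ⊆ ℝ_{≥0} be a finite set with 0 ∈ D and let 𝓕 be a set of weighted graphs. For each positive integer n let ex_D(n, 𝓕) be the maximum of e(G) over all 𝓕-free weighted graphs G of order n whose weight function attains values only in D. Then the limit π_D(𝓕) = lim_{n→∞} ex_D(n, 𝓕)/(n²/2) exists. -/

import Mathlib

open Filter Finset Topology

/-- Auxiliary: the set of attainable edge-sums of `𝓕`-free weighted graphs on `n`
vertices with weights in `D`. -/
def wtSet (D : Set ℝ) (𝓕 : Set (Σ m : ℕ, Fin m → Fin m → ℝ)) (n : ℕ) : Set ℝ :=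
  {e : ℝ | ∃ w : Fin n → Fin n → ℝ,
      (∀ x y, w x y = w y x) ∧ (∀ x, w x x = 0) ∧ (∀ x y, w x y ∈ D) ∧
      (∀ F ∈ 𝓕, ¬ ∃ φ : Fin F.1 → Fin n, Function.Injective φ ∧
          ∀ x y, F.2 x y ≤ w (φ x) (φ y)) ∧
      e = (1 / 2) * ∑ x : Fin n, ∑ y : Fin n, w x y}

/-- Existence of the generalised Turán density `π_D(𝓕)`: for a finite set
`D ⊆ ℝ_{≥0}` of admissible weights (with `0 ∈ D`) and a family `𝓕` of weighted graphs
(represented, up to isomorphism, as pairs of an order `m` and a weight function on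
`Fin m`), the ratio `ex_D(n, 𝓕)/(n²/2)` converges as `n → ∞`.  Here `ex_D(n, 𝓕)` is the
supremum of `e(G) = (1/2)·∑_{(x,y)} w(x,y)` over all `𝓕`-free weighted graphs `G` on `n`
vertices with weights in `D`. -/
theorem weighted_turan_density_exists (D : Set ℝ) (hDfin : D.Finite) (hD0 : (0 : ℝ) ∈ D)
    (hDnn : ∀ d ∈ D, 0 ≤ d)
    (𝓕 : Set (Σ m : ℕ, Fin m → Fin m → ℝ))
    (h𝓕 : ∀ F ∈ 𝓕, (∀ x y, F.2 x y = F.2 y x) ∧ (∀ x, F.2 x x = 0) ∧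
      (∀ x y, 0 ≤ F.2 x y)) :
    ∃ L : ℝ, Filter.Tendsto
      (fun n : ℕ =>
        sSup {e : ℝ | ∃ w : Fin n → Fin n → ℝ,
          (∀ x y, w x y = w y x) ∧ (∀ x, w x x = 0) ∧ (∀ x y, w x y ∈ D) ∧
          (∀ F ∈ 𝓕, ¬ ∃ φ : Fin F.1 → Fin n, Function.Injective φ ∧
              ∀ x y, F.2 x y ≤ w (φ x) (φ y)) ∧
          e = (1 / 2) * ∑ x : Fin n, ∑ y : Fin n, w x y} / ((n : ℝ) ^ 2 / 2))
      Filter.atTop (nhds L) := by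
  classical
  suffices h : ∃ L, Tendsto
      (fun n : ℕ => sSup (wtSet D 𝓕 n) / ((n : ℝ) ^ 2 / 2)) atTop (𝓝 L) by
    exact h
  set S : ℕ → Set ℝ := wtSet D 𝓕 with hSdef
  by_cases hdeg : ∃ F ∈ 𝓕, ∀ x y, F.2 x y = 0
  · -- degenerate case: some forbidden graph has all-zero weights
    obtain ⟨F, hF𝓕, hF0⟩ := hdeg
    refine ⟨0, Tendsto.congr' ?_ tendsto_const_nhds⟩
    filter_upwards [eventually_ge_atTop F.1] with n hn
    have hempty : S n = ∅ := by
      rw [Set.eq_empty_iff_forall_notMem]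
      rintro e ⟨w, hw1, hw2, hw3, hw4, hw5⟩
      exact hw4 F hF𝓕 ⟨Fin.castLE hn, Fin.castLE_injective hn,
        fun x y => by rw [hF0 x y]; exact hDnn _ (hw3 _ _)⟩
    simp [hempty, Real.sSup_empty]
  · push_neg at hdeg
    obtain ⟨M, hM⟩ := hDfin.bddAbove
    have hzero : ∀ n, (0 : ℝ) ∈ S n := by
      intro n
      refine ⟨fun _ _ => 0, fun _ _ => rfl, fun _ => rfl, fun _ _ => hD0, ?_, by simp⟩
      rintro F hF ⟨φ, hφ, hle⟩
      obtain ⟨x, y, hxy⟩ := hdeg F hF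
      exact hxy (le_antisymm (hle x y) ((h𝓕 F hF).2.2 x y))
    have hbdd : ∀ n, BddAbove (S n) := by
      intro n
      refine ⟨(1 / 2) * ((n : ℝ) ^ 2 * M), ?_⟩
      rintro e ⟨w, hw1, hw2, hw3, hw4, rfl⟩
      have h1 : ∑ x : Fin n, ∑ y : Fin n, w x y ≤ ∑ _x : Fin n, ∑ _y : Fin n, M :=
        Finset.sum_le_sum fun x _ => Finset.sum_le_sum fun y _ => hM (hw3 x y)
      have h2 : ∑ _x : Fin n, ∑ _y : Fin n, M = (n : ℝ) ^ 2 * M := by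
        simp [Finset.sum_const, Finset.card_univ, nsmul_eq_mul]
        ring
      rw [h2] at h1
      linarith
    have hexnn : ∀ n, 0 ≤ sSup (S n) := fun n => le_csSup (hbdd n) (hzero n)
    -- the key averaging inequality
    have key : ∀ n : ℕ, 2 ≤ n →
        ((n : ℝ) - 1) * sSup (S (n + 1)) ≤ ((n : ℝ) + 1) * sSup (S n) := by
      intro n hn
      have hn1 : (0 : ℝ) < (n : ℝ) - 1 := by
        have : (2 : ℝ) ≤ (n : ℝ) := by exact_mod_cast hn
        linarith
      rw [mul_comm, ← le_div_iff₀ hn1]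
      refine csSup_le ⟨0, hzero _⟩ ?_
      rintro e ⟨w, hw1, hw2, hw3, hw4, rfl⟩
      have hsub : ∀ v : Fin (n + 1),
          (1 / 2 : ℝ) * ∑ x : Fin n, ∑ y : Fin n, w (v.succAbove x) (v.succAbove y)
            ≤ sSup (S n) := by
        intro v
        refine le_csSup (hbdd n) ?_
        refine ⟨fun x y => w (v.succAbove x) (v.succAbove y),
          fun x y => hw1 _ _, fun x => hw2 _, fun x y => hw3 _ _, ?_, rfl⟩
        rintro F hF ⟨φ, hφ, hle⟩
        exact hw4 F hF ⟨v.succAbove ∘ φ,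
          Fin.succAbove_right_injective.comp hφ, fun x y => hle x y⟩
      have hrow : ∀ (v : Fin (n + 1)) (f : Fin (n + 1) → ℝ),
          ∑ x : Fin n, f (v.succAbove x) = (∑ a : Fin (n + 1), f a) - f v := by
        intro v f
        rw [Fin.sum_univ_succAbove f v]; ring
      have hinner : ∀ v : Fin (n + 1),
          ∑ x : Fin n, ∑ y : Fin n, w (v.succAbove x) (v.succAbove y)
            = (∑ a : Fin (n + 1), ∑ b : Fin (n + 1), w a b)
              - 2 * ∑ b : Fin (n + 1), w v b := by
        intro v
        have h1 : ∀ x : Fin n, ∑ y : Fin n, w (v.succAbove x) (v.succAbove y)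
            = (∑ b : Fin (n + 1), w (v.succAbove x) b) - w (v.succAbove x) v :=
          fun x => hrow v _
        rw [Finset.sum_congr rfl fun x _ => h1 x, Finset.sum_sub_distrib,
          hrow v (fun a => ∑ b : Fin (n + 1), w a b), hrow v (fun a => w a v)]
        have hcol : ∑ a : Fin (n + 1), w a v = ∑ b : Fin (n + 1), w v b :=
          Finset.sum_congr rfl fun a _ => hw1 a v
        rw [hcol, hw2 v]; ring
      have hsum : ∑ v : Fin (n + 1), ∑ x : Fin n, ∑ y : Fin n,
            w (v.succAbove x) (v.succAbove y)
          = ((n : ℝ) - 1) * ∑ a : Fin (n + 1), ∑ b : Fin (n + 1), w a b := by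
        rw [Finset.sum_congr rfl fun v _ => hinner v, Finset.sum_sub_distrib,
          Finset.sum_const, Finset.card_univ, Fintype.card_fin, nsmul_eq_mul,
          ← Finset.mul_sum]
        push_cast
        ring
      have h5 : ∑ v : Fin (n + 1), (1 / 2 : ℝ) * ∑ x : Fin n, ∑ y : Fin n,
            w (v.succAbove x) (v.succAbove y) ≤ ((n : ℝ) + 1) * sSup (S n) := by
        calc ∑ v : Fin (n + 1), (1 / 2 : ℝ) * ∑ x : Fin n, ∑ y : Fin n,
              w (v.succAbove x) (v.succAbove y)
            ≤ ∑ _v : Fin (n + 1), sSup (S n) := Finset.sum_le_sum fun v _ => hsub v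
          _ = ((n : ℝ) + 1) * sSup (S n) := by
              rw [Finset.sum_const, Finset.card_univ, Fintype.card_fin, nsmul_eq_mul]
              push_cast; ring
      rw [← Finset.mul_sum, hsum] at h5
      rw [le_div_iff₀ hn1]
      nlinarith [h5]
    -- the normalised extremal numbers form an antitone, bounded-below sequence
    set g : ℕ → ℝ := fun k => sSup (S (k + 2)) / (((k : ℝ) + 2) * ((k : ℝ) + 1)) with hg
    have hganti : Antitone g := by
      apply antitone_nat_of_succ_le
      intro k
      have h := key (k + 2) (by omega)
      have hidx : k + 2 + 1 = k + 1 + 2 := by omega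
      rw [hidx] at h
      push_cast at h
      have hk2 : (0 : ℝ) < (k : ℝ) + 2 := by positivity
      simp only [hg]
      rw [div_le_div_iff₀ (by positivity) (by positivity)]
      push_cast
      have h' := mul_le_mul_of_nonneg_right h hk2.le
      nlinarith [h']
    have hgbdd : BddBelow (Set.range g) := by
      refine ⟨0, ?_⟩
      rintro x ⟨k, rfl⟩
      exact div_nonneg (hexnn _) (by positivity)
    have hgL := tendsto_atTop_ciInf hganti hgbdd
    refine ⟨2 * ⨅ k, g k, ?_⟩
    rw [← Filter.tendsto_add_atTop_iff_nat 2]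
    have h2 : Tendsto (fun k : ℕ => 2 * ((k : ℝ) + 1) / ((k : ℝ) + 2)) atTop (𝓝 2) := by
      have ht : Tendsto (fun k : ℕ => ((k : ℝ) + 2)⁻¹) atTop (𝓝 0) :=
        (tendsto_atTop_add_const_right atTop (2 : ℝ) tendsto_natCast_atTop_atTop).inv_tendsto_atTop
      have hs : Tendsto (fun k : ℕ => 2 - 2 * ((k : ℝ) + 2)⁻¹) atTop
          (𝓝 (2 - 2 * 0)) := tendsto_const_nhds.sub (ht.const_mul 2)
      simp only [mul_zero, sub_zero] at hs
      refine hs.congr fun k => ?_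
      have hk : ((k : ℝ) + 2) ≠ 0 := by positivity
      field_simp
      ring
    have hmul : Tendsto (fun k : ℕ => g k * (2 * ((k : ℝ) + 1) / ((k : ℝ) + 2)))
        atTop (𝓝 (2 * ⨅ k, g k)) := by
      have := hgL.mul h2
      rwa [mul_comm] at this
    refine hmul.congr fun k => ?_
    have hk1 : ((k : ℝ) + 1) ≠ 0 := by positivity
    have hk2 : ((k : ℝ) + 2) ≠ 0 := by positivity
    show g k * (2 * ((k : ℝ) + 1) / ((k : ℝ) + 2))
        = sSup (S (k + 2)) / (((k + 2 : ℕ) : ℝ) ^ 2 / 2)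
    rw [hg]
    push_cast
    field_simp
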